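/- In the free group F on generators x and y, the element x·y·x·yⁿ is not primitive for any integer n ≥ 3. -/

import Mathlib

abbrev F := FreeGroup (Fin 2)

def x : F := FreeGroup.of 0
def y : F := FreeGroup.of 1

def IsPrimitive (w : F) : Prop := ∃ v : F, Subgroup.closure ({w, v} : Set F) = ⊤

/-- If a homomorphism kills `w` but its images of `x` and `y` do not commute,
then `w` is not primitive: indeed the image of `φ` would be generated by the
single element `φ v`, hence commutative. -/
lemma not_primitive_of_hom {G : Type*} [Group G] (φ : F →* G) (w : F)
    (hw : φ w = 1) (hc : φ x * φ y ≠ φ y * φ x) : ¬ IsPrimitive w := by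
  rintro ⟨v, hv⟩
  have hle : (⊤ : Subgroup F).map φ ≤ Subgroup.zpowers (φ v) := by
    rw [← hv, MonoidHom.map_closure]
    apply Subgroup.closure_le _ |>.mpr
    rintro g ⟨a, ha, rfl⟩
    rcases ha with rfl | rfl
    · rw [hw]; exact Subgroup.one_mem _
    · exact Subgroup.mem_zpowers _
  obtain ⟨k, hk⟩ := hle ⟨x, trivial, rfl⟩
  obtain ⟨l, hl⟩ := hle ⟨y, trivial, rfl⟩
  apply hc
  rw [← hk, ← hl, ← zpow_add, ← zpow_add, add_comm]

theorem xyxyn_not_primitive (n : ℤ) (hn : 3 ≤ n) :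
    ¬ IsPrimitive (x * y * x * y ^ n) := by
  rcases Int.even_or_odd n with he | ho
  · -- even case: use the dihedral group of order 2(n-1)
    obtain ⟨m, hmn⟩ : ∃ m : ℕ, (m : ℤ) = n - 1 :=
      ⟨(n - 1).toNat, Int.toNat_of_nonneg (show (0:ℤ) ≤ n - 1 by omega)⟩
    obtain ⟨k, hk⟩ := he
    have hm3 : 3 ≤ m := by omega
    let f : Fin 2 → DihedralGroup m := ![DihedralGroup.sr 0, DihedralGroup.r 1]
    apply not_primitive_of_hom (FreeGroup.lift f)
    · have hx : FreeGroup.lift f x = DihedralGroup.sr 0 := FreeGroup.lift_apply_of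
      have hy : FreeGroup.lift f y = DihedralGroup.r 1 := FreeGroup.lift_apply_of
      have hyn : FreeGroup.lift f (y ^ n) = DihedralGroup.r (n : ZMod m) := by
        rw [map_zpow, hy]
        have h0 : n = ((n.toNat : ℕ) : ℤ) := (Int.toNat_of_nonneg (show (0:ℤ) ≤ n by omega)).symm
        rw [h0, zpow_natCast, DihedralGroup.r_one_pow]
        push_cast
        norm_num
      rw [map_mul, map_mul, map_mul, hx, hy, hyn]
      rw [DihedralGroup.sr_mul_r, DihedralGroup.sr_mul_sr, DihedralGroup.r_mul_r]
      have : ((n : ZMod m)) = 1 := by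
        have : ((n - 1 : ℤ) : ZMod m) = 0 := by
          rw [← hmn]
          simp
        push_cast at this
        linear_combination this
      rw [this]
      simp [-DihedralGroup.r_zero, DihedralGroup.one_def]
    · have hx : FreeGroup.lift f x = DihedralGroup.sr 0 := FreeGroup.lift_apply_of
      have hy : FreeGroup.lift f y = DihedralGroup.r 1 := FreeGroup.lift_apply_of
      rw [hx, hy, DihedralGroup.sr_mul_r, DihedralGroup.r_mul_sr]
      intro h
      have h2 : (0 + 1 : ZMod m) = 0 - 1 := by injection h
      have : ((2 : ℤ) : ZMod m) = 0 := by push_cast; linear_combination h2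
      rw [ZMod.intCast_zmod_eq_zero_iff_dvd] at this
      have h2' := Int.le_of_dvd (by norm_num) this
      rw [hmn] at h2'
      omega
  · -- odd case: use the dihedral group of order 6
    let f : Fin 2 → DihedralGroup 3 := ![DihedralGroup.r (-1), DihedralGroup.sr 0]
    apply not_primitive_of_hom (FreeGroup.lift f)
    · have hx : FreeGroup.lift f x = DihedralGroup.r (-1) := FreeGroup.lift_apply_of
      have hy : FreeGroup.lift f y = DihedralGroup.sr 0 := FreeGroup.lift_apply_of
      have hyn : FreeGroup.lift f (y ^ n) = DihedralGroup.sr 0 := by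
        rw [map_zpow, hy]
        obtain ⟨k, hk⟩ := ho
        rw [hk, zpow_add, zpow_mul, zpow_two, DihedralGroup.sr_mul_self, one_zpow,
          one_mul, zpow_one]
      rw [map_mul, map_mul, map_mul, hx, hy, hyn]
      rw [DihedralGroup.r_mul_sr, DihedralGroup.sr_mul_r, DihedralGroup.sr_mul_sr]
      norm_num [DihedralGroup.one_def]
    · have hx : FreeGroup.lift f x = DihedralGroup.r (-1) := FreeGroup.lift_apply_of
      have hy : FreeGroup.lift f y = DihedralGroup.sr 0 := FreeGroup.lift_apply_of
      rw [hx, hy, DihedralGroup.r_mul_sr, DihedralGroup.sr_mul_r]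
      decide
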